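/- arXiv:2403.10991 — 6 statements merged into one kernel-verified Lean document; each statement's English description precedes it below -/
import Mathlib

section
/- Let V be a finite set and let h₁, h₂ : Finset V → ℝ be set functions that are supermodular, non-decreasing, and non-negative. Then the pointwise product h₁·h₂ (defined by (h₁·h₂)(A) = h₁(A)·h₂(A)) is supermodular, non-decreasing, and non-negative. -/
/-- A set function `f : Finset V → ℝ` is supermodular: for all `A ⊆ B` and `v ∉ B`,
`f(A ∪ {v}) − f(A) ≤ f(B ∪ {v}) − f(B)`. -/
def Supermodular {V : Type*} [DecidableEq V] (f : Finset V → ℝ) : Prop :=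
  ∀ A B : Finset V, A ⊆ B → ∀ v ∉ B, f (insert v A) - f A ≤ f (insert v B) - f B

/-- A set function is non-decreasing. -/
def NonDecreasing {V : Type*} (f : Finset V → ℝ) : Prop :=
  ∀ A B : Finset V, A ⊆ B → f A ≤ f B

/-- A set function is non-negative. -/
def NonNeg {V : Type*} (f : Finset V → ℝ) : Prop :=
  ∀ A : Finset V, 0 ≤ f A

theorem product_of_supermodular_nondecreasing_nonneg
    {V : Type*} [Fintype V] [DecidableEq V] (h₁ h₂ : Finset V → ℝ)
    (hs₁ : Supermodular h₁) (hm₁ : NonDecreasing h₁) (hn₁ : NonNeg h₁)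
    (hs₂ : Supermodular h₂) (hm₂ : NonDecreasing h₂) (hn₂ : NonNeg h₂) :
    Supermodular (fun A => h₁ A * h₂ A) ∧
      NonDecreasing (fun A => h₁ A * h₂ A) ∧
      NonNeg (fun A => h₁ A * h₂ A) := by
  refine ⟨?_, ?_, ?_⟩
  · intro A B hAB v hv
    simp only
    have hAvBv : insert v A ⊆ insert v B := Finset.insert_subset_insert v hAB
    have h1 := hs₁ A B hAB v hv
    have h2 := hs₂ A B hAB v hv
    have m1A : h₁ A ≤ h₁ (insert v A) := hm₁ _ _ (Finset.subset_insert v A)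
    have m2A : h₂ A ≤ h₂ (insert v A) := hm₂ _ _ (Finset.subset_insert v A)
    have m1B : h₁ B ≤ h₁ (insert v B) := hm₁ _ _ (Finset.subset_insert v B)
    have m2B : h₂ B ≤ h₂ (insert v B) := hm₂ _ _ (Finset.subset_insert v B)
    have m1 : h₁ (insert v A) ≤ h₁ (insert v B) := hm₁ _ _ hAvBv
    have m2 : h₂ A ≤ h₂ B := hm₂ _ _ hAB
    have n1 := hn₁ A
    have n2 := hn₂ A
    have n1B := hn₁ (insert v A)
    nlinarith [mul_le_mul m1 (sub_le_sub h2 (le_refl 0)) (by linarith) (by linarith [hn₁ (insert v B)]),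
      mul_le_mul m2 h1 (by linarith) (hn₂ B)]
  · intro A B hAB
    exact mul_le_mul (hm₁ A B hAB) (hm₂ A B hAB) (hn₂ A) (hn₁ B)
  · intro A
    exact mul_nonneg (hn₁ A) (hn₂ A)
end

section
/- Let V be a finite set and let h₁, h₂ : Finset V → ℝ be set functions that are supermodular, non-increasing, and non-negative. Then the pointwise product h₁·h₂ (defined by (h₁·h₂)(A) = h₁(A)·h₂(A)) is supermodular, non-increasing, and non-negative. -/
/-- A set function is non-increasing. -/
def NonIncreasing {V : Type*} (f : Finset V → ℝ) : Prop :=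
  ∀ A B : Finset V, A ⊆ B → f B ≤ f A

theorem product_of_supermodular_nonincreasing_nonneg
    {V : Type*} [Fintype V] [DecidableEq V] (h₁ h₂ : Finset V → ℝ)
    (hs₁ : Supermodular h₁) (hm₁ : NonIncreasing h₁) (hn₁ : NonNeg h₁)
    (hs₂ : Supermodular h₂) (hm₂ : NonIncreasing h₂) (hn₂ : NonNeg h₂) :
    Supermodular (fun A => h₁ A * h₂ A) ∧
      NonIncreasing (fun A => h₁ A * h₂ A) ∧
      NonNeg (fun A => h₁ A * h₂ A) := by
  refine ⟨?_, ?_, ?_⟩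
  · intro A B hAB v hv
    simp only
    have hAB' : insert v A ⊆ insert v B := Finset.insert_subset_insert v hAB
    have d1 : h₁ (insert v A) - h₁ A ≤ h₁ (insert v B) - h₁ B := hs₁ A B hAB v hv
    have d2 : h₂ (insert v A) - h₂ A ≤ h₂ (insert v B) - h₂ B := hs₂ A B hAB v hv
    have m1B : h₁ (insert v B) ≤ h₁ B := hm₁ B _ (Finset.subset_insert v B)
    have m2B : h₂ (insert v B) ≤ h₂ B := hm₂ B _ (Finset.subset_insert v B)
    have m1 : h₁ B ≤ h₁ A := hm₁ A B hAB
    have m2' : h₂ (insert v B) ≤ h₂ (insert v A) := hm₂ _ _ hAB'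
    have n1B : 0 ≤ h₁ B := hn₁ B
    have n2B' : 0 ≤ h₂ (insert v B) := hn₂ _
    have n2A' : 0 ≤ h₂ (insert v A) := hn₂ _
    have n1A : 0 ≤ h₁ A := hn₁ A
    -- term 1: (h₁A'-h₁A)·h₂A' ≤ (h₁B'-h₁B)·h₂B'
    have t1 : (h₁ (insert v A) - h₁ A) * h₂ (insert v A)
        ≤ (h₁ (insert v B) - h₁ B) * h₂ (insert v B) := by
      calc (h₁ (insert v A) - h₁ A) * h₂ (insert v A)
          ≤ (h₁ (insert v B) - h₁ B) * h₂ (insert v A) :=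
            mul_le_mul_of_nonneg_right d1 n2A'
        _ ≤ (h₁ (insert v B) - h₁ B) * h₂ (insert v B) :=
            mul_le_mul_of_nonpos_left m2' (by linarith)
    have t2 : h₁ A * (h₂ (insert v A) - h₂ A) ≤ h₁ B * (h₂ (insert v B) - h₂ B) := by
      calc h₁ A * (h₂ (insert v A) - h₂ A)
          ≤ h₁ A * (h₂ (insert v B) - h₂ B) := mul_le_mul_of_nonneg_left d2 n1A
        _ ≤ h₁ B * (h₂ (insert v B) - h₂ B) :=
            mul_le_mul_of_nonpos_right m1 (by linarith)
    nlinarith [t1, t2]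
  · intro A B hAB
    simp only
    exact mul_le_mul (hm₁ A B hAB) (hm₂ A B hAB) (hn₂ B) (hn₁ A)
  · intro A
    exact mul_nonneg (hn₁ A) (hn₂ A)
end

section
/- Let V be a finite set, F a finite index set, and for each t ∈ F let g_t : Finset V → ℝ be supermodular, non-increasing, and non-negative. Then the set function A ↦ ∏_{t ∈ F} g_t(A) is supermodular, non-increasing, and non-negative. -/
lemma mul_supermodular {V : Type*} [DecidableEq V] {f g : Finset V → ℝ}
    (hfs : Supermodular f) (hfm : NonIncreasing f) (hfn : NonNeg f)
    (hgs : Supermodular g) (hgm : NonIncreasing g) (hgn : NonNeg g) :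
    Supermodular (fun A => f A * g A) := by
  intro A B hAB v hv
  simp only
  have hA'B' : insert v A ⊆ insert v B := Finset.insert_subset_insert v hAB
  have h1 : f (insert v A) * g (insert v A) - f A * g A
      = f (insert v A) * (g (insert v A) - g A) + (f (insert v A) - f A) * g A := by ring
  have h2 : f (insert v B) * g (insert v B) - f B * g B
      = f (insert v B) * (g (insert v B) - g B) + (f (insert v B) - f B) * g B := by ring
  rw [h1, h2]
  have hgB : g (insert v B) - g B ≤ 0 :=
    sub_nonpos.mpr (hgm B (insert v B) (Finset.subset_insert v B))
  have hfB : f (insert v B) - f B ≤ 0 :=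
    sub_nonpos.mpr (hfm B (insert v B) (Finset.subset_insert v B))
  have t1 : f (insert v A) * (g (insert v A) - g A) ≤ f (insert v B) * (g (insert v B) - g B) :=
    calc f (insert v A) * (g (insert v A) - g A)
        ≤ f (insert v A) * (g (insert v B) - g B) := by
          exact mul_le_mul_of_nonneg_left (hgs A B hAB v hv) (hfn _)
      _ ≤ f (insert v B) * (g (insert v B) - g B) :=
          mul_le_mul_of_nonpos_right (hfm _ _ hA'B') hgB
  have t2 : (f (insert v A) - f A) * g A ≤ (f (insert v B) - f B) * g B :=
    calc (f (insert v A) - f A) * g A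
        ≤ (f (insert v B) - f B) * g A :=
          mul_le_mul_of_nonneg_right (hfs A B hAB v hv) (hgn _)
      _ ≤ (f (insert v B) - f B) * g B :=
          mul_le_mul_of_nonpos_left (hgm A B hAB) hfB
  linarith

theorem finite_product_of_supermodular_nonincreasing_nonneg
    {V : Type*} [Fintype V] [DecidableEq V]
    {F : Type*} [Fintype F] (g : F → Finset V → ℝ)
    (hs : ∀ t : F, Supermodular (g t))
    (hm : ∀ t : F, NonIncreasing (g t))
    (hn : ∀ t : F, NonNeg (g t)) :
    Supermodular (fun A => ∏ t : F, g t A) ∧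
      NonIncreasing (fun A => ∏ t : F, g t A) ∧
      NonNeg (fun A => ∏ t : F, g t A) := by
  classical
  suffices h : ∀ S : Finset F, Supermodular (fun A => ∏ t ∈ S, g t A) ∧
      NonIncreasing (fun A => ∏ t ∈ S, g t A) ∧ NonNeg (fun A => ∏ t ∈ S, g t A) from
    h Finset.univ
  intro S
  induction S using Finset.induction_on with
  | empty =>
    refine ⟨?_, ?_, ?_⟩ <;> intro A <;> simp [Supermodular, NonIncreasing, NonNeg]
  | insert _ _ hx ih =>
    rename_i a s
    obtain ⟨ihs, ihm, ihn⟩ := ih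
    simp only [Finset.prod_insert hx]
    refine ⟨mul_supermodular (hs a) (hm a) (hn a) ihs ihm ihn, ?_, ?_⟩
    · intro A B hAB
      exact mul_le_mul (hm a A B hAB) (ihm A B hAB) (ihn B) (hn a A)
    · intro A
      exact mul_nonneg (hn a A) (ihn A)
end

section
/- Let V be a finite set, F a finite index set, and for each t ∈ F let h_t : Finset V → ℝ be submodular, non-decreasing, and satisfy 0 ≤ h_t(A) ≤ 1 for all A ⊆ V. Then the set function A ↦ 1 − ∏_{t ∈ F} (1 − h_t(A)) is submodular, non-decreasing, and takes values in [0,1]. -/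
/-- A set function `f : Finset V → ℝ` is submodular: for all `A ⊆ B` and `v ∉ B`,
`f(A ∪ {v}) − f(A) ≥ f(B ∪ {v}) − f(B)`. -/
def Submodular {V : Type*} [DecidableEq V] (f : Finset V → ℝ) : Prop :=
  ∀ A B : Finset V, A ⊆ B → ∀ v ∉ B, f (insert v B) - f B ≤ f (insert v A) - f A

lemma prod_diff_mono_aux {F : Type*} (S : Finset F) (a a' b b' : F → ℝ)
    (h0b' : ∀ t, 0 ≤ b' t) (hbb' : ∀ t, b' t ≤ b t)
    (hba : ∀ t, b t ≤ a t) (hb'a' : ∀ t, b' t ≤ a' t)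
    (haa' : ∀ t, a' t ≤ a t)
    (hdiff : ∀ t, b t - b' t ≤ a t - a' t) :
    ∏ t ∈ S, b t - ∏ t ∈ S, b' t ≤ ∏ t ∈ S, a t - ∏ t ∈ S, a' t := by
  classical
  induction S using Finset.induction with
  | empty => simp
  | @insert s S hs ih =>
    rw [Finset.prod_insert hs, Finset.prod_insert hs, Finset.prod_insert hs,
      Finset.prod_insert hs]
    have h0a' : ∀ t, 0 ≤ a' t := fun t => le_trans (h0b' t) (hb'a' t)
    have hQ'0 : (0:ℝ) ≤ ∏ t ∈ S, b' t := Finset.prod_nonneg (fun t _ => h0b' t)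
    have hQQ' : ∏ t ∈ S, b' t ≤ ∏ t ∈ S, b t :=
      Finset.prod_le_prod (fun t _ => h0b' t) (fun t _ => hbb' t)
    have hP'Q' : ∏ t ∈ S, b' t ≤ ∏ t ∈ S, a' t :=
      Finset.prod_le_prod (fun t _ => h0b' t) (fun t _ => hb'a' t)
    have hPP' : ∏ t ∈ S, a' t ≤ ∏ t ∈ S, a t :=
      Finset.prod_le_prod (fun t _ => h0a' t) (fun t _ => haa' t)
    have hB0 : (0:ℝ) ≤ b s := le_trans (h0b' s) (hbb' s)
    nlinarith [hdiff s, hbb' s, hba s, hb'a' s, haa' s, h0b' s,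
      mul_le_mul_of_nonneg_left ih hB0,
      mul_le_mul_of_nonneg_right (hba s) (sub_nonneg.2 hQQ'),
      mul_le_mul_of_nonneg_right (hdiff s) hQ'0,
      mul_le_mul_of_nonneg_left hP'Q' (sub_nonneg.2 (hba s)),
      mul_le_mul_of_nonneg_left hP'Q' (sub_nonneg.2 (hb'a' s)),
      mul_le_mul_of_nonneg_right (sub_le_sub (hba s) (le_refl (b' s))) hQ'0]

theorem one_sub_prod_one_sub_submodular
    {V : Type*} [Fintype V] [DecidableEq V]
    {F : Type*} [Fintype F] (h : F → Finset V → ℝ)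
    (hsub : ∀ t : F, Submodular (h t))
    (hmono : ∀ t : F, NonDecreasing (h t))
    (hrange : ∀ (t : F) (A : Finset V), 0 ≤ h t A ∧ h t A ≤ 1) :
    Submodular (fun A => 1 - ∏ t : F, (1 - h t A)) ∧
      NonDecreasing (fun A => 1 - ∏ t : F, (1 - h t A)) ∧
      (∀ A : Finset V,
        0 ≤ 1 - ∏ t : F, (1 - h t A) ∧ 1 - ∏ t : F, (1 - h t A) ≤ 1) := by
  refine ⟨?_, ?_, ?_⟩
  · intro A B hAB v hv
    simp only
    have key := prod_diff_mono_aux (Finset.univ : Finset F)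
      (fun t => 1 - h t A) (fun t => 1 - h t (insert v A))
      (fun t => 1 - h t B) (fun t => 1 - h t (insert v B))
      (fun t => by linarith [(hrange t (insert v B)).2])
      (fun t => by linarith [hmono t B (insert v B) (Finset.subset_insert v B)])
      (fun t => by linarith [hmono t A B hAB])
      (fun t => by linarith [hmono t (insert v A) (insert v B) (Finset.insert_subset_insert v hAB)])
      (fun t => by linarith [hmono t A (insert v A) (Finset.subset_insert v A)])
      (fun t => by linarith [hsub t A B hAB v hv])
    linarith [key]
  · intro A B hAB
    simp only
    have : ∏ t : F, (1 - h t B) ≤ ∏ t : F, (1 - h t A) :=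
      Finset.prod_le_prod (fun t _ => by linarith [(hrange t B).2])
        (fun t _ => by linarith [hmono t A B hAB])
    linarith
  · intro A
    constructor
    · have : ∏ t : F, (1 - h t A) ≤ 1 :=
        Finset.prod_le_one (fun t _ => by linarith [(hrange t A).2])
          (fun t _ => by linarith [(hrange t A).1])
      linarith
    · have : (0:ℝ) ≤ ∏ t : F, (1 - h t A) :=
        Finset.prod_nonneg (fun t _ => by linarith [(hrange t A).2])
      linarith
end

section
/- Let V be a finite set, let J and F be finite index sets, let θ : J → ℝ satisfy θ_j ≥ 0 for every j ∈ J, and for each j ∈ J and t ∈ F let h_{j,t} : Finset V → ℝ be submodular, non-decreasing, and satisfy 0 ≤ h_{j,t}(A) ≤ 1 for all A ⊆ V. Then the set function f(A) = ∑_{j ∈ J} θ_j · (1 − ∏_{t ∈ F} (1 − h_{j,t}(A))) is submodular and non-decreasing. -/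
/-- Product of nonnegative, ≤1, nonincreasing, supermodular functions is again such. -/
lemma prod_props {V F : Type*} [DecidableEq V] (g : F → Finset V → ℝ)
    (s : Finset F)
    (h0 : ∀ t ∈ s, ∀ A : Finset V, 0 ≤ g t A)
    (h1 : ∀ t ∈ s, ∀ A : Finset V, g t A ≤ 1)
    (hdec : ∀ t ∈ s, ∀ A B : Finset V, A ⊆ B → g t B ≤ g t A)
    (hsup : ∀ t ∈ s, ∀ A B : Finset V, A ⊆ B → ∀ v ∉ B,
      g t (insert v A) - g t A ≤ g t (insert v B) - g t B) :
    (∀ A : Finset V, 0 ≤ ∏ t ∈ s, g t A) ∧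
    (∀ A : Finset V, (∏ t ∈ s, g t A) ≤ 1) ∧
    (∀ A B : Finset V, A ⊆ B → (∏ t ∈ s, g t B) ≤ ∏ t ∈ s, g t A) ∧
    (∀ A B : Finset V, A ⊆ B → ∀ v ∉ B,
      (∏ t ∈ s, g t (insert v A)) - (∏ t ∈ s, g t A) ≤
      (∏ t ∈ s, g t (insert v B)) - (∏ t ∈ s, g t B)) := by
  classical
  induction s using Finset.induction_on with
  | empty => simp
  | @insert x s hx ih =>
    have hxm : x ∈ insert x s := Finset.mem_insert_self x s
    have hmem : ∀ t ∈ s, t ∈ insert x s := fun t ht => Finset.mem_insert_of_mem ht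
    obtain ⟨Q0, Q1, Qdec, Qsup⟩ := ih
      (fun t ht => h0 t (hmem t ht)) (fun t ht => h1 t (hmem t ht))
      (fun t ht => hdec t (hmem t ht)) (fun t ht => hsup t (hmem t ht))
    refine ⟨?_, ?_, ?_, ?_⟩
    · intro A
      rw [Finset.prod_insert hx]
      exact mul_nonneg (h0 x hxm A) (Q0 A)
    · intro A
      rw [Finset.prod_insert hx]
      calc g x A * ∏ t ∈ s, g t A ≤ 1 * 1 :=
            mul_le_mul (h1 x hxm A) (Q1 A) (Q0 A) zero_le_one
        _ = 1 := by ring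
    · intro A B hAB
      rw [Finset.prod_insert hx, Finset.prod_insert hx]
      exact mul_le_mul (hdec x hxm A B hAB) (Qdec A B hAB) (Q0 B) (h0 x hxm A)
    · intro A B hAB v hv
      rw [Finset.prod_insert hx, Finset.prod_insert hx,
        Finset.prod_insert hx, Finset.prod_insert hx]
      set a := g x A
      set a' := g x (insert v A)
      set b := g x B
      set b' := g x (insert v B)
      set q := ∏ t ∈ s, g t A
      set q' := ∏ t ∈ s, g t (insert v A)
      set r := ∏ t ∈ s, g t B
      set r' := ∏ t ∈ s, g t (insert v B)
      have hvAB : insert v A ⊆ insert v B := Finset.insert_subset_insert v hAB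
      have ha' : (0:ℝ) ≤ a' := h0 x hxm _
      have hb'a' : b' ≤ a' := hdec x hxm _ _ hvAB
      have hq0 : (0:ℝ) ≤ q := Q0 A
      have hrq : r ≤ q := Qdec A B hAB
      have hr0 : (0:ℝ) ≤ r := Q0 B
      have hQsup : q' - q ≤ r' - r := Qsup A B hAB v hv
      have hgsup : a' - a ≤ b' - b := hsup x hxm A B hAB v hv
      have hrr' : r' - r ≤ 0 := by
        have := Qdec B (insert v B) (Finset.subset_insert v B); linarith
      have hbb' : b' - b ≤ 0 := by
        have := hdec x hxm B (insert v B) (Finset.subset_insert v B); linarith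
      have e1 : a' * (q' - q) ≤ a' * (r' - r) := mul_le_mul_of_nonneg_left hQsup ha'
      have e2 : a' * (r' - r) ≤ b' * (r' - r) := mul_le_mul_of_nonpos_right hb'a' hrr'
      have e3 : q * (a' - a) ≤ q * (b' - b) := mul_le_mul_of_nonneg_left hgsup hq0
      have e4 : q * (b' - b) ≤ r * (b' - b) := mul_le_mul_of_nonpos_right hrq hbb'
      nlinarith [e1, e2, e3, e4]

/-- Theorem 1 of the paper: the multi-robot multi-objective coverage objective
`f(A, θ) = ∑_j θ_j (1 − ∏_t (1 − h_{j,t}(A)))` is monotone submodular. -/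
theorem coverage_objective_monotone_submodular
    {V : Type*} [Fintype V] [DecidableEq V]
    {J : Type*} [Fintype J] {F : Type*} [Fintype F]
    (θ : J → ℝ) (hθ : ∀ j : J, 0 ≤ θ j)
    (h : J → F → Finset V → ℝ)
    (hsub : ∀ (j : J) (t : F), Submodular (h j t))
    (hmono : ∀ (j : J) (t : F), NonDecreasing (h j t))
    (hrange : ∀ (j : J) (t : F) (A : Finset V), 0 ≤ h j t A ∧ h j t A ≤ 1) :
    Submodular (fun A => ∑ j : J, θ j * (1 - ∏ t : F, (1 - h j t A))) ∧
      NonDecreasing (fun A => ∑ j : J, θ j * (1 - ∏ t : F, (1 - h j t A))) := by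
  classical
  have key : ∀ j : J,
      (∀ A B : Finset V, A ⊆ B →
        (∏ t : F, (1 - h j t B)) ≤ ∏ t : F, (1 - h j t A)) ∧
      (∀ A B : Finset V, A ⊆ B → ∀ v ∉ B,
        (∏ t : F, (1 - h j t (insert v A))) - (∏ t : F, (1 - h j t A)) ≤
        (∏ t : F, (1 - h j t (insert v B))) - (∏ t : F, (1 - h j t B))) := by
    intro j
    obtain ⟨_, _, Qdec, Qsup⟩ := prod_props (fun t A => 1 - h j t A) Finset.univ
      (fun t _ A => by have := (hrange j t A).2; show (0:ℝ) ≤ 1 - h j t A; linarith)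
      (fun t _ A => by have := (hrange j t A).1; show (1:ℝ) - h j t A ≤ 1; linarith)
      (fun t _ A B hAB => by have := hmono j t A B hAB; linarith)
      (fun t _ A B hAB v hv => by have := hsub j t A B hAB v hv; linarith)
    exact ⟨Qdec, Qsup⟩
  constructor
  · intro A B hAB v hv
    dsimp only
    rw [← Finset.sum_sub_distrib, ← Finset.sum_sub_distrib]
    apply Finset.sum_le_sum
    intro j _
    have hs := (key j).2 A B hAB v hv
    have := mul_le_mul_of_nonneg_left hs (hθ j)
    nlinarith [this]
  · intro A B hAB
    dsimp only
    apply Finset.sum_le_sum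
    intro j _
    have hd := (key j).1 A B hAB
    have := mul_le_mul_of_nonneg_left hd (hθ j)
    nlinarith [this]
end

section
/- Let V be a finite set, (Ω, μ) a measure space, φ : Ω → ℝ a non-negative integrable function, and q : V → Ω → ℝ a family of measurable functions with 0 ≤ q(i)(x) ≤ 1 for all i ∈ V and x ∈ Ω. Then the set function h(A) = ∫_Ω φ(x) · (1 − ∏_{i ∈ A} (1 − q(i)(x))) dμ(x) is well-defined (the integrand is integrable for every A ⊆ V), submodular, non-decreasing, and non-negative. -/
open MeasureTheory

/-- The single-step event coverage objective
`h(A) = ∫ φ(x) (1 − ∏_{i ∈ A} (1 − q i x)) dμ` is well defined (integrable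
integrand), submodular, non-decreasing, and non-negative. -/
theorem coverage_integral_submodular
    {V : Type*} [Fintype V] [DecidableEq V]
    {Ω : Type*} [MeasurableSpace Ω] (μ : Measure Ω)
    (φ : Ω → ℝ) (hφ_int : Integrable φ μ) (hφ_nonneg : ∀ x : Ω, 0 ≤ φ x)
    (q : V → Ω → ℝ) (hq_meas : ∀ i : V, Measurable (q i))
    (hq_range : ∀ (i : V) (x : Ω), 0 ≤ q i x ∧ q i x ≤ 1) :
    (∀ A : Finset V,
        Integrable (fun x => φ x * (1 - ∏ i ∈ A, (1 - q i x))) μ) ∧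
      Submodular
        (fun A : Finset V => ∫ x, φ x * (1 - ∏ i ∈ A, (1 - q i x)) ∂μ) ∧
      NonDecreasing
        (fun A : Finset V => ∫ x, φ x * (1 - ∏ i ∈ A, (1 - q i x)) ∂μ) ∧
      NonNeg
        (fun A : Finset V => ∫ x, φ x * (1 - ∏ i ∈ A, (1 - q i x)) ∂μ) := by
  -- basic facts about the product
  have hP0 : ∀ (A : Finset V) (x : Ω), 0 ≤ ∏ i ∈ A, (1 - q i x) := fun A x =>
    Finset.prod_nonneg fun i _ => by linarith [(hq_range i x).2]
  have hP1 : ∀ (A : Finset V) (x : Ω), ∏ i ∈ A, (1 - q i x) ≤ 1 := fun A x =>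
    Finset.prod_le_one (fun i _ => by linarith [(hq_range i x).2])
      (fun i _ => by linarith [(hq_range i x).1])
  have hPmono : ∀ (A B : Finset V), A ⊆ B → ∀ x : Ω,
      ∏ i ∈ B, (1 - q i x) ≤ ∏ i ∈ A, (1 - q i x) := by
    intro A B hAB x
    rw [← Finset.prod_sdiff hAB]
    calc (∏ i ∈ B \ A, (1 - q i x)) * ∏ i ∈ A, (1 - q i x)
        ≤ 1 * ∏ i ∈ A, (1 - q i x) :=
          mul_le_mul_of_nonneg_right (hP1 _ x) (hP0 _ x)
      _ = _ := one_mul _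
  have hint : ∀ A : Finset V,
      Integrable (fun x => φ x * (1 - ∏ i ∈ A, (1 - q i x))) μ := by
    intro A
    have hmeas : AEStronglyMeasurable
        (fun x => φ x * (1 - ∏ i ∈ A, (1 - q i x))) μ := by
      exact hφ_int.aestronglyMeasurable.mul
        ((measurable_const.sub (Finset.measurable_prod A fun i _ =>
          measurable_const.sub (hq_meas i))).aestronglyMeasurable)
    refine Integrable.mono' hφ_int.abs hmeas (Filter.Eventually.of_forall fun x => ?_)
    have h1 : 0 ≤ 1 - ∏ i ∈ A, (1 - q i x) := by linarith [hP1 A x]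
    have h2 : 1 - ∏ i ∈ A, (1 - q i x) ≤ 1 := by linarith [hP0 A x]
    rw [Real.norm_eq_abs, abs_mul, abs_of_nonneg h1]
    calc |φ x| * (1 - ∏ i ∈ A, (1 - q i x)) ≤ |φ x| * 1 := by
          apply mul_le_mul_of_nonneg_left h2 (abs_nonneg _)
      _ = |φ x| := mul_one _
  refine ⟨hint, ?_, ?_, ?_⟩
  · -- submodular
    intro A B hAB v hvB
    have hvA : v ∉ A := fun h => hvB (hAB h)
    rw [← integral_sub (hint _) (hint _), ← integral_sub (hint _) (hint _)]
    apply integral_mono ((hint _).sub (hint _)) ((hint _).sub (hint _))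
    intro x
    simp only [Finset.prod_insert hvB, Finset.prod_insert hvA]
    have key : q v x * ∏ i ∈ B, (1 - q i x) ≤ q v x * ∏ i ∈ A, (1 - q i x) :=
      mul_le_mul_of_nonneg_left (hPmono A B hAB x) (hq_range v x).1
    have := mul_le_mul_of_nonneg_left key (hφ_nonneg x)
    simp only [Pi.sub_apply]
    nlinarith [this]
  · -- non-decreasing
    intro A B hAB
    apply integral_mono (hint A) (hint B)
    intro x
    have h1 := hPmono A B hAB x
    have h2 := hφ_nonneg x
    dsimp only
    nlinarith
  · -- non-negative
    intro A
    apply integral_nonneg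
    intro x
    have h1 := hP1 A x
    exact mul_nonneg (hφ_nonneg x) (by linarith)
end
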